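/- Let p > q > 0 be coprime integers, let n be the length of the Bezout chain of (p, q), and let r₀, …, r_k be integers with rᵢ ≤ −2 for all i and [r₀, …, r_k]⁻ = −p/q. Then n = (−r₀ − 1) + Σ_{i=1}^{k} (−rᵢ − 2). -/

import Mathlib

/-- Negative continued fraction value `[r₀, …, r_k]⁻`:
`[r_k]⁻ = r_k` and `[r_j, …, r_k]⁻ = r_j − 1/[r_{j+1}, …, r_k]⁻`. -/
def ncf : List ℤ → ℚ
  | [] => 0
  | [r] => (r : ℚ)
  | r :: rest => (r : ℚ) - 1 / ncf rest

/-- `(p′, q′)` is the Bezout successor of `(p, q)`: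
`p q′ − q p′ = 1`, `0 < p′ < p`, `0 < q′ ≤ q`. -/
def BezoutNext (p q p' q' : ℤ) : Prop :=
  p * q' - q * p' = 1 ∧ 0 < p' ∧ p' < p ∧ 0 < q' ∧ q' ≤ q

/-- `P 0 = (p, q), …, P n = (1, 1)` is the Bezout chain of `(p, q)`: each step
is the Bezout successor, and `(1, 1)` is reached exactly at step `n`. -/
def IsBezoutChain (p q : ℤ) (n : ℕ) (P : ℕ → ℤ × ℤ) : Prop :=
  P 0 = (p, q) ∧ P n = (1, 1) ∧ (∀ i < n, P i ≠ (1, 1)) ∧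
  ∀ i < n, BezoutNext (P i).1 (P i).2 (P (i + 1)).1 (P (i + 1)).2

namespace Stmt7Aux

def kk : List ℤ → ℤ × ℤ
  | [] => (1, 0)
  | a :: s => (a * (kk s).1 - (kk s).2, (kk s).1)

def qq : List ℤ → ℤ × ℤ
  | [] => (0, -1)
  | a :: s => (a * (qq s).1 - (qq s).2, (qq s).1)

def D : List ℤ → List ℤ
  | [] => []
  | [a] => [a - 1]
  | a :: s => if 3 ≤ a then (a - 1) :: s else D s

def S (m : List ℤ) : ℤ := m.sum + 1 - 2 * m.length

lemma kk_cons (a : ℤ) (s : List ℤ) :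
    kk (a :: s) = (a * (kk s).1 - (kk s).2, (kk s).1) := rfl

lemma qq_cons (a : ℤ) (s : List ℤ) :
    qq (a :: s) = (a * (qq s).1 - (qq s).2, (qq s).1) := rfl

lemma delta (m : List ℤ) : (kk m).1 * (qq m).2 - (kk m).2 * (qq m).1 = -1 := by
  induction m with
  | nil => simp [kk, qq]
  | cons a s ih => rw [kk_cons, qq_cons]; dsimp only; linear_combination ih

lemma inv : ∀ m : List ℤ, m ≠ [] → (∀ a ∈ m, 2 ≤ a) →
    1 ≤ (kk m).2 ∧ (kk m).2 < (kk m).1 ∧ 0 ≤ (qq m).2 ∧ (qq m).2 < (qq m).1 := by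
  intro m
  induction m with
  | nil => simp
  | cons a s ih =>
    intro _ h
    have ha : 2 ≤ a := h a (by simp)
    rcases s with _ | ⟨b, t⟩
    · simp only [kk, qq]
      norm_num; omega
    · set s := b :: t with hsdef
      obtain ⟨h1, h2, h3, h4⟩ := ih (by simp [hsdef]) (fun x hx => h x (by simp [hsdef] at hx ⊢; tauto))
      rw [kk_cons, qq_cons]
      dsimp only
      refine ⟨by omega, ?_, by omega, ?_⟩ <;> nlinarith

lemma main : ∀ m : List ℤ, m ≠ [] → (∀ a ∈ m, 2 ≤ a) →
    BezoutNext (kk m).1 (qq m).1 (kk (D m)).1 (qq (D m)).1 ∧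
    (kk m).2 * (qq (D m)).1 - (qq m).2 * (kk (D m)).1 = 1 ∧
    (D m = [1] ∨ (D m ≠ [] ∧ ∀ a ∈ D m, 2 ≤ a)) ∧
    S (D m) = S m - 1 := by
  intro m
  induction m with
  | nil => simp
  | cons a s ih =>
    intro _ h
    have ha : 2 ≤ a := h a (by simp)
    rcases s with _ | ⟨b, t⟩
    · -- m = [a]
      refine ⟨?_, ?_, ?_, ?_⟩
      · simp only [D, kk, qq, BezoutNext]; norm_num; omega
      · simp only [D, kk, qq]; ring
      · rcases eq_or_lt_of_le ha with h2 | h3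
        · left; simp [D, ← h2]
        · right; simp only [D]; refine ⟨by simp, ?_⟩; intro x hx; simp at hx; omega
      · simp [D, S]; ring
    · -- m = a :: s, s = b :: t nonempty
      have hSstep : ∀ c : ℤ, ∀ u : List ℤ, S (c :: u) = c - 2 + S u := by
        intro c u; simp [S]; push_cast; ring
      set s := b :: t with hsdef
      have hs : s ≠ [] := by simp [hsdef]
      have hs2 : ∀ x ∈ s, 2 ≤ x := fun x hx => h x (by simp [hsdef] at hx ⊢; tauto)
      obtain ⟨k2, k1, q2, q1⟩ := inv s hs hs2
      have hδ := delta s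
      by_cases h3 : 3 ≤ a
      · -- decrement head
        have hD : D (a :: s) = (a - 1) :: s := by rw [hsdef]; simp [D, h3]
        rw [hD]
        have hk1 : 2 * (kk s).1 ≤ (a - 1) * (kk s).1 := by nlinarith
        have hq1 : 2 * (qq s).1 ≤ (a - 1) * (qq s).1 := by nlinarith
        rw [kk_cons a, qq_cons a, kk_cons (a-1), qq_cons (a-1)]
        refine ⟨⟨?_, ?_, ?_, ?_, ?_⟩, ?_, ?_, ?_⟩
        · dsimp only; linear_combination -hδ
        · dsimp only; linarith
        · dsimp only; nlinarith
        · dsimp only; linarith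
        · dsimp only; linarith
        · dsimp only; linear_combination -hδ
        · right
          refine ⟨by simp, ?_⟩
          intro x hx
          rcases List.mem_cons.mp hx with h' | h'
          · omega
          · exact hs2 x h'
        · rw [hSstep (a-1) s, hSstep a s]; ring
      · -- a = 2, recurse
        have ha2 : a = 2 := by omega
        subst ha2
        have hD : D (2 :: s) = D s := by rw [hsdef]; simp [D]
        rw [hD]
        obtain ⟨⟨ibez, iP, iPlt, iQ, iQle⟩, ii, igood, iS⟩ := ih hs hs2
        rw [kk_cons, qq_cons]
        refine ⟨⟨?_, ?_, ?_, ?_, ?_⟩, ?_, igood, ?_⟩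
        · dsimp only; linear_combination 2 * ibez - ii
        · exact iP
        · dsimp only; linarith
        · exact iQ
        · dsimp only; linarith
        · dsimp only; exact ibez
        · rw [hSstep]; omega

end Stmt7Aux

namespace Stmt7Aux

lemma uniq {p q a b c d : ℤ} (h1 : BezoutNext p q a b) (h2 : BezoutNext p q c d) :
    a = c ∧ b = d := by
  obtain ⟨e1, ha1, ha2, hb1, hb2⟩ := h1
  obtain ⟨e2, hc1, hc2, hd1, hd2⟩ := h2
  have hcop : IsCoprime q p := ⟨-a, b, by linear_combination e1⟩
  have hdvd : q ∣ p * (b - d) := ⟨a - c, by linear_combination e1 - e2⟩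
  have hq : q ∣ b - d := hcop.dvd_of_dvd_mul_left hdvd
  have hbd : b = d := by
    rcases hq with ⟨e, he⟩
    have hqpos : 0 < q := lt_of_lt_of_le hb1 hb2
    rcases lt_trichotomy e 0 with h' | h' | h'
    · nlinarith
    · rw [h'] at he; simp at he; omega
    · nlinarith
  subst hbd
  constructor
  · have hppos : 0 < p := lt_trans ha1 ha2
    have : q * a = q * c := by linarith
    have hqpos : 0 < q := lt_of_lt_of_le hb1 hb2
    exact mul_left_cancel₀ (ne_of_gt hqpos) this
  · rfl

lemma chain : ∀ n : ℕ, ∀ m : List ℤ, ∀ P : ℕ → ℤ × ℤ,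
    (m = [1] ∨ (m ≠ [] ∧ ∀ a ∈ m, 2 ≤ a)) →
    IsBezoutChain (kk m).1 (qq m).1 n P → (n : ℤ) = S m := by
  intro n
  induction n with
  | zero =>
    intro m P hm hc
    obtain ⟨h0, hn, _, _⟩ := hc
    rcases hm with hm | ⟨hne, hpos⟩
    · subst hm; simp [S]
    · exfalso
      obtain ⟨i1, i2, _, _⟩ := inv m hne hpos
      rw [h0] at hn
      have : (kk m).1 = 1 := by
        have := congrArg Prod.fst hn; simpa using this
      omega
  | succ n ih =>
    intro m P hm hc
    obtain ⟨h0, hn, hne, hstep⟩ := hc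
    rcases hm with hm | ⟨hne', hpos⟩
    · exfalso
      apply hne 0 (Nat.succ_pos n)
      rw [h0, hm]
      simp [kk, qq]
    · obtain ⟨bez, _, _, hS⟩ := main m hne' hpos
      have hb0 := hstep 0 (Nat.succ_pos n)
      rw [h0] at hb0
      have huq := uniq hb0 bez
      have hP1 : P 1 = ((kk (D m)).1, (qq (D m)).1) := by
        have := huq.1; have := huq.2
        exact Prod.ext huq.1 huq.2
      have hgood : D m = [1] ∨ (D m ≠ [] ∧ ∀ a ∈ D m, 2 ≤ a) := by
        obtain ⟨_, _, g, _⟩ := main m hne' hpos; exact g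
      have hchain' : IsBezoutChain (kk (D m)).1 (qq (D m)).1 n (fun i => P (i + 1)) := by
        refine ⟨hP1, hn, ?_, ?_⟩
        · intro i hi; exact hne (i + 1) (by omega)
        · intro i hi; exact hstep (i + 1) (by omega)
      have := ih (D m) (fun i => P (i + 1)) hgood hchain'
      push_cast
      omega

end Stmt7Aux

namespace Stmt7Aux

lemma kq_append (b : ℤ) : ∀ m : List ℤ,
    kk (m ++ [b]) = (b * (kk m).1 - (qq m).1, b * (kk m).2 - (qq m).2) ∧
    qq (m ++ [b]) = ((kk m).1, (kk m).2) := by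
  intro m
  induction m with
  | nil => constructor <;> simp [kk, qq]
  | cons a s ih =>
    simp only [List.cons_append, kk_cons, qq_cons, ih.1, ih.2, Prod.mk.injEq]
    exact ⟨⟨by ring, trivial⟩, trivial⟩

lemma ncf_eq : ∀ l : List ℤ, l ≠ [] → (∀ a ∈ l, 2 ≤ a) →
    ncf (l.map (fun x => -x)) = -((kk l.reverse).1 : ℚ) / ((qq l.reverse).1) := by
  intro l
  induction l with
  | nil => simp
  | cons c t ih =>
    intro _ h
    rcases t with _ | ⟨d, t'⟩
    · simp only [List.map, List.reverse_singleton, ncf, kk, qq]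
      norm_num
    · set t := d :: t' with htdef
      have ht : t ≠ [] := by simp [htdef]
      have ht2 : ∀ x ∈ t, 2 ≤ x := fun x hx => h x (by simp [htdef] at hx ⊢; tauto)
      obtain ⟨i1, i2, i3, i4⟩ := inv t.reverse (by simp [htdef]) (by intro x hx; exact ht2 x (List.mem_reverse.mp hx))
      have hPpos : (0:ℤ) < (kk t.reverse).1 := by omega
      have hQpos : (0:ℤ) < (qq t.reverse).1 := by omega
      have hP : ((kk t.reverse).1 : ℚ) ≠ 0 := by exact_mod_cast ne_of_gt hPpos
      have hQ : ((qq t.reverse).1 : ℚ) ≠ 0 := by exact_mod_cast ne_of_gt hQpos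
      have hiht := ih ht ht2
      have hrev : (c :: t).reverse = t.reverse ++ [c] := by simp
      have hk := (kq_append c t.reverse).1
      have hq := (kq_append c t.reverse).2
      rw [hrev, hk, hq]
      have hncf : ncf ((c :: t).map (fun x => -x)) = (-c : ℚ) - 1 / ncf (t.map (fun x => -x)) := by
        rw [htdef]
        simp only [List.map, ncf]
        push_cast; ring
      rw [hncf, hiht]
      dsimp only
      push_cast
      field_simp
      ring

end Stmt7Aux

open Stmt7Aux

/-- If `[r₀, …, r_k]⁻ = −p/q` with all `rᵢ ≤ −2`, then the length `n` of the
Bezout chain of `(p, q)` equals `(−r₀ − 1) + Σ_{i=1}^{k} (−rᵢ − 2)`. -/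
theorem stmt7 (p q : ℤ) (hq : 0 < q) (hqp : q < p) (hco : Int.gcd p q = 1)
    (n : ℕ) (P : ℕ → ℤ × ℤ) (hchain : IsBezoutChain p q n P)
    (k : ℕ) (r : ℕ → ℤ) (hr : ∀ i ≤ k, r i ≤ -2)
    (hval : ncf (List.ofFn fun i : Fin (k + 1) => r i.1) = -(p : ℚ) / (q : ℚ)) :
    (n : ℤ) = (-r 0 - 1) + ∑ i ∈ Finset.Icc 1 k, (-r i - 2) := by
  classical
  set la : List ℤ := List.ofFn (fun i : Fin (k + 1) => -r i.1) with hla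
  have hlane : la ≠ [] := by simp [hla]
  have hla2 : ∀ a ∈ la, 2 ≤ a := by
    intro a hamem
    rw [hla, List.mem_ofFn] at hamem
    obtain ⟨i, hi⟩ := hamem
    have hle := hr i.1 (by omega)
    omega
  have hmap : la.map (fun x => -x) = List.ofFn (fun i : Fin (k + 1) => r i.1) := by
    rw [hla, List.map_ofFn]
    congr 1
    funext i
    simp
  set m := la.reverse with hm
  have hmne : m ≠ [] := by simp [hm, hlane]
  have hm2 : ∀ a ∈ m, 2 ≤ a := fun a ha => hla2 a (List.mem_reverse.mp ha)
  obtain ⟨i1, i2, i3, i4⟩ := Stmt7Aux.inv m hmne hm2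
  have hδ := Stmt7Aux.delta m
  have hnval := Stmt7Aux.ncf_eq la hlane hla2
  rw [hmap] at hnval
  have heq : -((kk m).1 : ℚ) / ((qq m).1 : ℚ) = -(p : ℚ) / (q : ℚ) := hnval.symm.trans hval
  have hKpos : 0 < (kk m).1 := by omega
  have hQpos : 0 < (qq m).1 := by omega
  have hQne : ((qq m).1 : ℚ) ≠ 0 := by exact_mod_cast ne_of_gt hQpos
  have hqne : (q : ℚ) ≠ 0 := by exact_mod_cast ne_of_gt hq
  rw [neg_div, neg_div, neg_inj] at heq
  have hZ : (kk m).1 * q = p * (qq m).1 := by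
    exact_mod_cast (div_eq_div_iff hQne hqne).mp heq
  have cop1 : IsCoprime ((kk m).1) ((qq m).1) := ⟨-(qq m).2, (kk m).2, by linear_combination -hδ⟩
  have cop2 : IsCoprime p q := Int.isCoprime_iff_gcd_eq_one.mpr hco
  have d1 : p ∣ (kk m).1 := cop2.dvd_of_dvd_mul_right ⟨(qq m).1, hZ⟩
  have d2 : (kk m).1 ∣ p := cop1.dvd_of_dvd_mul_right ⟨q, by linarith⟩
  have hPp : (kk m).1 = p := Int.dvd_antisymm (le_of_lt hKpos) (by omega) d2 d1
  have hQq : (qq m).1 = q := by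
    have h' : p * q = p * (qq m).1 := by rw [← hPp] at hZ ⊢; linarith
    exact (mul_left_cancel₀ (by omega : p ≠ 0) h').symm
  rw [← hPp, ← hQq] at hchain
  have hn := Stmt7Aux.chain n m P (Or.inr ⟨hmne, hm2⟩) hchain
  rw [hn]
  have hsum : Stmt7Aux.S m = (∑ i ∈ Finset.range (k + 1), (-r i)) + 1 - 2 * (k + 1) := by
    simp only [Stmt7Aux.S, hm, hla, List.sum_reverse, List.length_reverse,
      List.sum_ofFn, List.length_ofFn]
    rw [Fin.sum_univ_eq_sum_range (fun j => -r j) (k + 1)]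
    push_cast
    ring
  have hins : Finset.range (k + 1) = insert 0 (Finset.Icc 1 k) := by
    ext x; simp; omega
  have h0notin : (0 : ℕ) ∉ Finset.Icc 1 k := by simp
  rw [hsum, hins, Finset.sum_insert h0notin]
  have hIcc : ∑ i ∈ Finset.Icc 1 k, (-r i - 2) = (∑ i ∈ Finset.Icc 1 k, (-r i)) - 2 * k := by
    rw [Finset.sum_sub_distrib, Finset.sum_const, Nat.card_Icc]
    simp [mul_comm]
  rw [hIcc]
  push_cast
  ring
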